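/- Let r ≥ 3, n = p_1^{n_1}⋯p_r^{n_r} with primes p_1 < ... < p_r, a < b in [r] with n_b ≥ 3, and β defined as β_a^s = φ(n) + (n/(p_1⋯p_r))·(1/p_a^{s-1})·[ (p_1⋯p_r)/p_a + φ((p_1⋯p_r)/p_a)·(p_a^{s-1} − 2) ]. Suppose 2·φ((p_1⋯p_r)/p_a) < (p_1⋯p_r)/p_a and p_b^2·(p_b − p_a) + 2·φ(p_a) ≥ (r−1)·p_a. Then β_a^{n_a} > β_b^{n_b}. -/

import Mathlib

open Finset

private lemma totprod (p : ℕ → ℕ) (s : Finset ℕ) :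
    (∀ i ∈ s, (p i).Prime) → (∀ i ∈ s, ∀ j ∈ s, i ≠ j → p i ≠ p j) →
    Nat.totient (∏ i ∈ s, p i) = ∏ i ∈ s, (p i - 1) := by
  induction s using Finset.induction_on with
  | empty => simp
  | @insert x t hx ih =>
    intro hp hne
    have hx' : x ∈ insert x t := mem_insert_self x t
    have hco : Nat.Coprime (p x) (∏ i ∈ t, p i) :=
      Nat.Coprime.prod_right fun i hi =>
        (Nat.coprime_primes (hp x hx') (hp i (mem_insert_of_mem hi))).2
          (hne x hx' i (mem_insert_of_mem hi) (fun h => hx (h ▸ hi)))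
    rw [prod_insert hx, Nat.totient_mul hco, Nat.totient_prime (hp x hx'),
      ih (fun i hi => hp i (mem_insert_of_mem hi))
        (fun i hi j hj => hne i (mem_insert_of_mem hi) j (mem_insert_of_mem hj)),
      prod_insert hx]

private lemma prodkey_aux (n : ℕ) : ∀ T : Finset ℕ, T.card ≤ n → (∀ m ∈ T, 2 ≤ m) →
    ∏ m ∈ T, m ≤ (T.card + 1) * ∏ m ∈ T, (m - 1) := by
  induction n with
  | zero =>
    intro T hT _
    rw [Finset.card_eq_zero.1 (Nat.le_zero.1 hT)]
    simp
  | succ n ih =>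
    intro T hT h2
    rcases T.eq_empty_or_nonempty with rfl | hTne
    · simp
    · obtain ⟨M, hM, hMmax⟩ : ∃ M ∈ T, ∀ m ∈ T, m ≤ M :=
        ⟨T.max' hTne, T.max'_mem hTne, fun m hm => T.le_max' m hm⟩
      have hsub : T ⊆ Finset.Icc 2 M := fun m hm => Finset.mem_Icc.2 ⟨h2 m hm, hMmax m hm⟩
      have hcard := Finset.card_le_card hsub
      rw [Nat.card_Icc] at hcard
      have hM2 : 2 ≤ M := h2 M hM
      have hMc : T.card + 1 ≤ M := by omega
      have hce : (T.erase M).card = T.card - 1 := Finset.card_erase_of_mem hM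
      have hc1 : 1 ≤ T.card := Finset.card_pos.2 hTne
      have ihe := ih (T.erase M) (by omega) (fun m hm => h2 m (Finset.mem_of_mem_erase hm))
      rw [← Finset.mul_prod_erase T _ hM, ← Finset.mul_prod_erase T (fun m => m - 1) hM]
      have hmul : M * T.card ≤ (T.card + 1) * (M - 1) := by
        obtain ⟨M', rfl⟩ : ∃ M', M = M' + 1 := ⟨M - 1, by omega⟩
        have h' : T.card ≤ M' := by omega
        simp only [Nat.add_sub_cancel]
        nlinarith
      calc M * ∏ m ∈ T.erase M, m
          ≤ M * (((T.erase M).card + 1) * ∏ m ∈ T.erase M, (m - 1)) :=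
            Nat.mul_le_mul_left _ ihe
        _ = (M * T.card) * ∏ m ∈ T.erase M, (m - 1) := by
            rw [hce]
            have h3 : T.card - 1 + 1 = T.card := by omega
            rw [h3, mul_assoc]
        _ ≤ ((T.card + 1) * (M - 1)) * ∏ m ∈ T.erase M, (m - 1) :=
            Nat.mul_le_mul_right _ hmul
        _ = (T.card + 1) * ((M - 1) * ∏ m ∈ T.erase M, (m - 1)) := by ring

private lemma core (pa pb C D sa sb : ℕ) (hpa : 2 ≤ pa) (hpb2 : 2 ≤ pb)
    (hab : pa < pb) (hsb : 2 ≤ sb)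
    (hphi : 2 * ((pb - 1) * D) < pb * C)
    (hnat : pa * C ≤ pb ^ 2 * ((pb - pa) * D) + 2 * ((pa - 1) * D)) :
    1 / (pb : ℚ) ^ sb * (((pa * C : ℕ) : ℚ) + (((pa - 1) * D : ℕ) : ℚ) * ((pb : ℚ) ^ sb - 2)) <
    1 / (pa : ℚ) ^ sa * (((pb * C : ℕ) : ℚ) + (((pb - 1) * D : ℕ) : ℚ) * ((pa : ℚ) ^ sa - 2)) := by
  have hqa : (0:ℚ) < (pa:ℚ) := by exact_mod_cast (by omega : 0 < pa)
  have hqb : (0:ℚ) < (pb:ℚ) := by exact_mod_cast (by omega : 0 < pb)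
  have hpow_a : (0:ℚ) < (pa:ℚ) ^ sa := pow_pos hqa _
  have hpow_b : (0:ℚ) < (pb:ℚ) ^ sb := pow_pos hqb _
  have hQphi : 2 * (((pb:ℚ) - 1) * D) < (pb:ℚ) * C := by
    have h2 : ((2 * ((pb - 1) * D) : ℕ) : ℚ) < ((pb * C : ℕ) : ℚ) := by exact_mod_cast hphi
    push_cast [Nat.cast_sub (by omega : 1 ≤ pb)] at h2
    linarith
  have hQnat : (pa:ℚ) * C ≤ (pb:ℚ) ^ 2 * (((pb:ℚ) - (pa:ℚ)) * D) + 2 * (((pa:ℚ) - 1) * D) := by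
    have h2 : ((pa * C : ℕ) : ℚ) ≤ ((pb ^ 2 * ((pb - pa) * D) + 2 * ((pa - 1) * D) : ℕ) : ℚ) := by
      exact_mod_cast hnat
    push_cast [Nat.cast_sub hab.le, Nat.cast_sub (by omega : 1 ≤ pa)] at h2
    linarith
  have hone : (1:ℚ) ≤ (pb:ℚ) := by exact_mod_cast (by omega : 1 ≤ pb)
  have hpow2 : (pb:ℚ) ^ 2 ≤ (pb:ℚ) ^ sb := pow_le_pow_right₀ hone hsb
  have hD0 : (0:ℚ) ≤ ((pb:ℚ) - (pa:ℚ)) * D := by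
    have h1 : (pa:ℚ) ≤ (pb:ℚ) := by exact_mod_cast hab.le
    have hD : (0:ℚ) ≤ (D:ℚ) := Nat.cast_nonneg D
    nlinarith
  push_cast [Nat.cast_sub hab.le, Nat.cast_sub (by omega : 1 ≤ pa),
    Nat.cast_sub (by omega : 1 ≤ pb)]
  rw [div_mul_eq_mul_div, div_mul_eq_mul_div, one_mul, one_mul, div_lt_div_iff₀ hpow_b hpow_a]
  have key1 : ((pa:ℚ) * C - 2 * (((pa:ℚ) - 1) * D)) * (pa:ℚ) ^ sa ≤
      (((pb:ℚ) - (pa:ℚ)) * D * (pb:ℚ) ^ sb) * (pa:ℚ) ^ sa := by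
    apply mul_le_mul_of_nonneg_right _ hpow_a.le
    calc (pa:ℚ) * C - 2 * (((pa:ℚ) - 1) * D) ≤ (pb:ℚ) ^ 2 * (((pb:ℚ) - (pa:ℚ)) * D) := by
          linarith
      _ ≤ ((pb:ℚ) - (pa:ℚ)) * D * (pb:ℚ) ^ sb := by
          rw [mul_comm]
          exact mul_le_mul_of_nonneg_left hpow2 hD0
  have key2 : (2 * (((pb:ℚ) - 1) * D) - (pb:ℚ) * C) * (pb:ℚ) ^ sb < 0 :=
    mul_neg_of_neg_of_pos (by linarith) hpow_b
  nlinarith [key1, key2]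


noncomputable def beta (r : ℕ) (p e : ℕ → ℕ) (a s : ℕ) : ℚ :=
  (Nat.totient (∏ i ∈ Finset.range r, p i ^ e i) : ℚ) +
    ((∏ i ∈ Finset.range r, p i ^ e i : ℕ) : ℚ) /
        ((∏ i ∈ Finset.range r, p i : ℕ) : ℚ) *
      (1 / (p a : ℚ) ^ (s - 1)) *
      (((∏ i ∈ Finset.range r, p i : ℕ) : ℚ) / (p a : ℚ) +
        (Nat.totient ((∏ i ∈ Finset.range r, p i) / p a) : ℚ) *
          ((p a : ℚ) ^ (s - 1) - 2))

theorem stmt_15 (r : ℕ) (hr : 3 ≤ r) (p e : ℕ → ℕ)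
    (hp : ∀ i < r, (p i).Prime)
    (hmono : ∀ i j, i < j → j < r → p i < p j)
    (he : ∀ i < r, 1 ≤ e i)
    (a b : ℕ) (hab : a < b) (hb : b < r) (heb : 3 ≤ e b)
    (hphi : 2 * Nat.totient ((∏ i ∈ Finset.range r, p i) / p a) <
      (∏ i ∈ Finset.range r, p i) / p a)
    (hineq : p b ^ 2 * (p b - p a) + 2 * Nat.totient (p a) ≥ (r - 1) * p a) :
    beta r p e a (e a) > beta r p e b (e b) := by
  classical
  have har : a < r := hab.trans hb
  have hpa := hp a har
  have hpb := hp b hb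
  have hpa2 : 2 ≤ p a := hpa.two_le
  have hpb2 : 2 ≤ p b := hpb.two_le
  have hpab : p a < p b := hmono a b hab hb
  have hne : ∀ i ∈ Finset.range r, ∀ j ∈ Finset.range r, i ≠ j → p i ≠ p j := by
    intro i hi j hj hij
    rcases hij.lt_or_gt with h | h
    · exact (hmono i j h (Finset.mem_range.1 hj)).ne
    · exact (hmono j i h (Finset.mem_range.1 hi)).ne'
  have haR : a ∈ Finset.range r := Finset.mem_range.2 har
  have hbR : b ∈ Finset.range r := Finset.mem_range.2 hb
  have hbRa : b ∈ (Finset.range r).erase a := Finset.mem_erase.2 ⟨hab.ne', hbR⟩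
  have haRb : a ∈ (Finset.range r).erase b := Finset.mem_erase.2 ⟨hab.ne, haR⟩
  obtain ⟨C, hC⟩ : ∃ C, ∏ i ∈ ((Finset.range r).erase a).erase b, p i = C := ⟨_, rfl⟩
  obtain ⟨D, hD⟩ : ∃ D, ∏ i ∈ ((Finset.range r).erase a).erase b, (p i - 1) = D := ⟨_, rfl⟩
  have hSsub : ((Finset.range r).erase a).erase b ⊆ Finset.range r := fun i hi =>
    Finset.mem_of_mem_erase (Finset.mem_of_mem_erase hi)
  -- product decompositions
  have hPa : ∏ i ∈ (Finset.range r).erase a, p i = p b * C := by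
    rw [← Finset.mul_prod_erase _ p hbRa, hC]
  have hPb : ∏ i ∈ (Finset.range r).erase b, p i = p a * C := by
    rw [← Finset.mul_prod_erase _ p haRb, Finset.erase_right_comm, hC]
  have hPfact : ∏ i ∈ Finset.range r, p i = p a * (p b * C) := by
    rw [← Finset.mul_prod_erase _ p haR, hPa]
  have hPfactb : ∏ i ∈ Finset.range r, p i = p b * (p a * C) := by
    rw [← Finset.mul_prod_erase _ p hbR, hPb]
  have hdiva : (∏ i ∈ Finset.range r, p i) / p a = p b * C := by
    rw [hPfact]; exact Nat.mul_div_cancel_left _ (by omega)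
  have hdivb : (∏ i ∈ Finset.range r, p i) / p b = p a * C := by
    rw [hPfactb]; exact Nat.mul_div_cancel_left _ (by omega)
  -- totients
  have htota : Nat.totient (p b * C) = (p b - 1) * D := by
    rw [← hPa, totprod p _ (fun i hi => hp i (Finset.mem_range.1 (Finset.mem_of_mem_erase hi)))
      (fun i hi j hj => hne i (Finset.mem_of_mem_erase hi) j (Finset.mem_of_mem_erase hj)),
      ← Finset.mul_prod_erase _ (fun i => p i - 1) hbRa, hD]
  have htotb : Nat.totient (p a * C) = (p a - 1) * D := by
    rw [← hPb, totprod p _ (fun i hi => hp i (Finset.mem_range.1 (Finset.mem_of_mem_erase hi)))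
      (fun i hi j hj => hne i (Finset.mem_of_mem_erase hi) j (Finset.mem_of_mem_erase hj)),
      ← Finset.mul_prod_erase _ (fun i => p i - 1) haRb, Finset.erase_right_comm, hD]
  -- hphi in nat form
  rw [hdiva, htota] at hphi
  -- hineq in nat form
  rw [Nat.totient_prime hpa] at hineq
  -- key combinatorial bound: C ≤ (r-1) * D
  have hinjS : ∀ i ∈ ((Finset.range r).erase a).erase b,
      ∀ j ∈ ((Finset.range r).erase a).erase b, p i = p j → i = j := by
    intro i hi j hj h
    by_contra hij
    exact hne i (hSsub hi) j (hSsub hj) hij h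
  have hcardS : (((Finset.range r).erase a).erase b).card = r - 2 := by
    rw [Finset.card_erase_of_mem hbRa, Finset.card_erase_of_mem haR, Finset.card_range]
    omega
  have hCD : C ≤ (r - 1) * D := by
    have h2 : ∀ m ∈ (((Finset.range r).erase a).erase b).image p, 2 ≤ m := by
      intro m hm
      obtain ⟨i, hi, rfl⟩ := Finset.mem_image.1 hm
      exact (hp i (Finset.mem_range.1 (hSsub hi))).two_le
    have hk := prodkey_aux _ ((((Finset.range r).erase a).erase b).image p) le_rfl h2
    rw [Finset.prod_image hinjS, Finset.prod_image hinjS,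
      Finset.card_image_of_injOn (fun i hi j hj h => hinjS i hi j hj h),
      hcardS, hC, hD] at hk
    have hr2 : r - 2 + 1 = r - 1 := by omega
    rwa [hr2] at hk
  have hnat : p a * C ≤ p b ^ 2 * ((p b - p a) * D) + 2 * ((p a - 1) * D) := by
    calc p a * C ≤ p a * ((r - 1) * D) := Nat.mul_le_mul_left _ hCD
      _ = ((r - 1) * p a) * D := by ring
      _ ≤ (p b ^ 2 * (p b - p a) + 2 * (p a - 1)) * D := Nat.mul_le_mul_right _ hineq
      _ = p b ^ 2 * ((p b - p a) * D) + 2 * ((p a - 1) * D) := by ring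
  -- positivity of the global factor
  have hNpos : 0 < ∏ i ∈ Finset.range r, p i ^ e i :=
    Finset.prod_pos fun i hi => pow_pos (hp i (Finset.mem_range.1 hi)).pos _
  have hPpos : 0 < ∏ i ∈ Finset.range r, p i :=
    Finset.prod_pos fun i hi => (hp i (Finset.mem_range.1 hi)).pos
  have hQpos : (0:ℚ) < ((∏ i ∈ Finset.range r, p i ^ e i : ℕ) : ℚ) /
      ((∏ i ∈ Finset.range r, p i : ℕ) : ℚ) :=
    div_pos (by exact_mod_cast hNpos) (by exact_mod_cast hPpos)
  -- cast division rewrites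
  have hqane : ((p a : ℚ)) ≠ 0 := by
    have : (0:ℚ) < (p a : ℚ) := by exact_mod_cast (by omega : 0 < p a)
    exact this.ne'
  have hqbne : ((p b : ℚ)) ≠ 0 := by
    have : (0:ℚ) < (p b : ℚ) := by exact_mod_cast (by omega : 0 < p b)
    exact this.ne'
  have hPQa : ((∏ i ∈ Finset.range r, p i : ℕ) : ℚ) / (p a : ℚ) = ((p b * C : ℕ) : ℚ) := by
    rw [hPfact]
    push_cast
    rw [mul_div_cancel_left₀ _ hqane]
  have hPQb : ((∏ i ∈ Finset.range r, p i : ℕ) : ℚ) / (p b : ℚ) = ((p a * C : ℕ) : ℚ) := by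
    rw [hPfactb]
    push_cast
    rw [mul_div_cancel_left₀ _ hqbne]
  rw [gt_iff_lt]
  simp only [beta]
  rw [hdiva, hdivb, htota, htotb, hPQa, hPQb, mul_assoc, mul_assoc]
  refine add_lt_add_right (mul_lt_mul_of_pos_left ?_ hQpos) _
  exact core (p a) (p b) C D (e a - 1) (e b - 1) hpa2 hpb2 hpab (by omega) hphi hnat
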